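/- Let K be an idempotent semifield and M a module over K. If b : Basis ι K M and b' : Basis ι' K M are two bases of M, then the index types ι and ι' have the same cardinality. -/

import Mathlib

section Aux

variable {K : Type*} [Semifield K]

lemma idem_add_eq_zero_left (hidem : ∀ a : K, a + a = a) {a b : K} (h : a + b = 0) : a = 0 := by
  calc a = a + (a + b) := by rw [h, add_zero]
  _ = (a + a) + b := by rw [add_assoc]
  _ = a + b := by rw [hidem]
  _ = 0 := h

lemma idem_sum_eq_zero (hidem : ∀ a : K, a + a = a) {α : Type*} {s : Finset α} {f : α → K}
    (h : ∑ x ∈ s, f x = 0) : ∀ x ∈ s, f x = 0 := by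
  classical
  induction s using Finset.cons_induction with
  | empty => simp
  | cons a s ha ih =>
    rw [Finset.sum_cons] at h
    intro x hx
    rcases Finset.mem_cons.mp hx with rfl | hx
    · exact idem_add_eq_zero_left hidem h
    · exact ih (idem_add_eq_zero_left hidem (by rwa [add_comm] at h)) x hx

end Aux

theorem idempotent_semifield_basis_card {K : Type*} [Semifield K]
    (hidem : ∀ a : K, a + a = a)
    {M : Type*} [AddCommMonoid M] [Module K M]
    {ι ι' : Type*} (b : Module.Basis ι K M) (b' : Module.Basis ι' K M) :
    Nonempty (ι ≃ ι') := by
  classical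
  set c : ι' → (ι →₀ K) := fun j => b.repr (b' j) with hc
  set d : ι → (ι' →₀ K) := fun i => b'.repr (b i) with hd
  -- key identities
  have key : ∀ i : ι, ∀ k : ι, (∑ j ∈ (d i).support, d i j * c j k)
      = (Finsupp.single i (1 : K)) k := by
    intro i k
    have h0 : b.repr (b i) = (d i).sum fun j a => a • (c j) := by
      conv_lhs => rw [← b'.linearCombination_repr (b i)]
      rw [Finsupp.linearCombination_apply, Finsupp.sum, map_sum]
      simp [Finsupp.sum, map_smul, hd, hc]
    have := (congrArg (fun v : ι →₀ K => v k) h0).symm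
    simpa [Finsupp.sum_apply, Finsupp.sum, Finsupp.smul_apply, smul_eq_mul, b.repr_self] using this
  have key' : ∀ j : ι', ∀ l : ι', (∑ k ∈ (c j).support, c j k * d k l)
      = (Finsupp.single j (1 : K)) l := by
    intro j l
    have h0 : b'.repr (b' j) = (c j).sum fun k a => a • (d k) := by
      conv_lhs => rw [← b.linearCombination_repr (b' j)]
      rw [Finsupp.linearCombination_apply, Finsupp.sum, map_sum]
      simp [Finsupp.sum, map_smul, hd, hc]
    have := (congrArg (fun v : ι' →₀ K => v l) h0).symm
    simpa [Finsupp.sum_apply, Finsupp.sum, Finsupp.smul_apply, smul_eq_mul, b'.repr_self] using this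
  -- existence
  have hex : ∀ i : ι, ∃ j : ι', d i j ≠ 0 ∧ c j i ≠ 0 := by
    intro i
    by_contra h
    push_neg at h
    have h1 := key i i
    rw [Finsupp.single_eq_same] at h1
    have : ∑ j ∈ (d i).support, d i j * c j i = 0 := by
      apply Finset.sum_eq_zero
      intro j hj
      rcases eq_or_ne (d i j) 0 with h2 | h2
      · rw [h2, zero_mul]
      · rw [h j h2, mul_zero]
    rw [this] at h1
    exact zero_ne_one h1
  have hex' : ∀ j : ι', ∃ i : ι, c j i ≠ 0 ∧ d i j ≠ 0 := by
    intro j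
    by_contra h
    push_neg at h
    have h1 := key' j j
    rw [Finsupp.single_eq_same] at h1
    have : ∑ k ∈ (c j).support, c j k * d k j = 0 := by
      apply Finset.sum_eq_zero
      intro k hk
      rcases eq_or_ne (c j k) 0 with h2 | h2
      · rw [h2, zero_mul]
      · rw [h k h2, mul_zero]
    rw [this] at h1
    exact zero_ne_one h1
  -- uniqueness helpers
  have huniq : ∀ (i i' : ι) (j : ι'), d i j ≠ 0 → c j i' ≠ 0 → i = i' := by
    intro i i' j hdij hcji'
    by_contra hne
    have h1 := key i i'
    rw [Finsupp.single_eq_of_ne' hne] at h1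
    have := idem_sum_eq_zero hidem h1 j (Finsupp.mem_support_iff.mpr hdij)
    exact (mul_ne_zero hdij hcji') this
  have huniq' : ∀ (j j' : ι') (i : ι), c j i ≠ 0 → d i j' ≠ 0 → j = j' := by
    intro j j' i hcji hdij'
    by_contra hne
    have h1 := key' j j'
    rw [Finsupp.single_eq_of_ne' hne] at h1
    have := idem_sum_eq_zero hidem h1 i (Finsupp.mem_support_iff.mpr hcji)
    exact (mul_ne_zero hcji hdij') this
  choose f hf1 hf2 using hex
  choose g hg1 hg2 using hex'
  refine ⟨⟨f, g, ?_, ?_⟩⟩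
  · intro i
    exact (huniq i (g (f i)) (f i) (hf1 i) (hg1 (f i))).symm
  · intro j
    exact (huniq' j (f (g j)) (g j) (hg1 j) (hf1 (g j))).symm
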